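/- Define the star height |·|_* : StExp → ℕ by |0|_* = 0, |a|_* = 0 for a ∈ Act, |r + s|_* = max(|r|_*, |s|_*), |r·s|_* = max(|r|_*, |s|_*), and |r*s|_* = max(|r|_* + 1, |s|_*). Then: (A) |r|_* < |r*s|_* for all r, s ∈ StExp; and (B) if r → s in the syntactic chart (StExp, δ), then |s|_* ≤ |r|_*. Consequently, if r →+ r' then |r'|_* < |(r*s)|_* whenever r is the loop body, i.e., if r*s →+ r' via the loop body then the star height strictly drops below |r*s|_*. -/

import Mathlib

/-- A chart over action alphabet `Act` with state space `X`: each state is assigned a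
finite set of transitions, either `(a, none)` (i.e. `x →a ✓`) or `(a, some y)` (i.e. `x →a y`). -/
structure Chart (Act X : Type) where
  tr : X → Finset (Act × Option X)

/-- `x →a ✓` in the chart `C`. -/
def Chart.Halts {Act X : Type} (C : Chart Act X) (x : X) : Prop :=
  ∃ a : Act, (a, (none : Option X)) ∈ C.tr x

/-- `x → y` (for some action) in the chart `C`. -/
def Chart.StepRel {Act X : Type} (C : Chart Act X) (x y : X) : Prop :=
  ∃ a : Act, (a, some y) ∈ C.tr x

/-- `R` is a bisimulation between the charts `C` and `D`. -/
def IsBisim {Act X Y : Type} (C : Chart Act X) (D : Chart Act Y) (R : X → Y → Prop) : Prop :=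
  ∀ x y, R x y → ∀ a : Act,
    (((a, (none : Option X)) ∈ C.tr x) ↔ ((a, (none : Option Y)) ∈ D.tr y)) ∧
    (∀ x', (a, some x') ∈ C.tr x → ∃ y', (a, some y') ∈ D.tr y ∧ R x' y') ∧
    (∀ y', (a, some y') ∈ D.tr y → ∃ x', (a, some x') ∈ C.tr x ∧ R x' y')

/-- States `x` of `C` and `y` of `D` are bisimilar. -/
def Bisimilar {Act X Y : Type} (C : Chart Act X) (D : Chart Act Y) (x : X) (y : Y) : Prop :=
  ∃ R, IsBisim C D R ∧ R x y

/-- A chart homomorphism is a function whose graph is a bisimulation. -/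
def IsChartHom {Act X Y : Type} (C : Chart Act X) (D : Chart Act Y) (h : X → Y) : Prop :=
  IsBisim C D (fun x y => h x = y)

/-- 1-free star expressions over the alphabet `Act`. -/
inductive StExp (Act : Type) : Type where
  | zero : StExp Act
  | act : Act → StExp Act
  | add : StExp Act → StExp Act → StExp Act
  | mul : StExp Act → StExp Act → StExp Act
  | star : StExp Act → StExp Act → StExp Act
deriving DecidableEq

/-- Continuation after a transition of the left operand: `✓` continues as `s`,
and a state `t` continues as `t·s`. -/
def StExp.seqAfter {Act : Type} (s : StExp Act) : Option (StExp Act) → StExp Act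
  | none => s
  | some t => t.mul s

/-- The transition function of the syntactic chart, following Antimirov-style rules. -/
def StExp.tr {Act : Type} [DecidableEq Act] : StExp Act → Finset (Act × Option (StExp Act))
  | .zero => ∅
  | .act a => {(a, none)}
  | .add r s => r.tr ∪ s.tr
  | .mul r s => r.tr.image (fun p => (p.1, some (StExp.seqAfter s p.2)))
  | .star r s =>
      (r.tr.image (fun p => (p.1, some (StExp.seqAfter (StExp.star r s) p.2)))) ∪ s.tr

/-- The syntactic chart `(StExp, δ)`. -/
def synChart (Act : Type) [DecidableEq Act] : Chart Act (StExp Act) := ⟨StExp.tr⟩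

/-- Star height of a 1-free star expression. -/
def StExp.sh {Act : Type} : StExp Act → ℕ
  | .zero => 0
  | .act _ => 0
  | .add r s => max r.sh s.sh
  | .mul r s => max r.sh s.sh
  | .star r s => max (r.sh + 1) s.sh


lemma sh_step {Act : Type} [DecidableEq Act] :
    ∀ (r : StExp Act) (a : Act) (s' : StExp Act), (a, some s') ∈ r.tr → s'.sh ≤ r.sh := by
  intro r
  induction r with
  | zero => intro a s' h; simp [StExp.tr] at h
  | act b => intro a s' h; simp [StExp.tr] at h
  | add r s ihr ihs =>
    intro a s' h
    simp [StExp.tr] at h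
    rcases h with h | h
    · exact le_trans (ihr a s' h) (le_max_left _ _)
    · exact le_trans (ihs a s' h) (le_max_right _ _)
  | mul r s ihr ihs =>
    intro a s' h
    simp [StExp.tr] at h
    rcases h with ⟨ox, hmem, hx⟩
    subst hx
    cases ox with
    | none => simp [StExp.seqAfter, StExp.sh]
    | some t =>
      simp [StExp.seqAfter, StExp.sh]
      have := ihr _ t hmem
      omega
  | star r s ihr ihs =>
    intro a s' h
    simp [StExp.tr] at h
    rcases h with ⟨ox, hmem, hx⟩ | h
    · subst hx
      cases ox with
      | none => simp [StExp.seqAfter, StExp.sh]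
      | some t =>
        simp [StExp.seqAfter, StExp.sh]
        have := ihr _ t hmem
        omega
    · exact le_trans (ihs a s' h) (le_max_right _ _)

/-- (A) `|r|_* < |r*s|_*`; (B) transitions of the syntactic chart do not increase star
height; consequently (C) if `r →+ r'` then `|r'|_* < |r*s|_*`. -/
theorem star_height_facts {Act : Type} [DecidableEq Act] :
    (∀ r s : StExp Act, r.sh < (r.star s).sh) ∧
    (∀ r s : StExp Act, (synChart Act).StepRel r s → s.sh ≤ r.sh) ∧
    (∀ r r' s : StExp Act, Relation.TransGen ((synChart Act).StepRel) r r' →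
      r'.sh < (r.star s).sh) := by
  refine ⟨?_, ?_, ?_⟩
  · intro r s
    simp [StExp.sh]
  · rintro r s ⟨a, h⟩
    exact sh_step r a s h
  · intro r r' s h
    have hle : r'.sh ≤ r.sh := by
      induction h with
      | single h => rcases h with ⟨a, h⟩; exact sh_step _ a _ h
      | tail _ h2 ih => rcases h2 with ⟨a, h2⟩; exact le_trans (sh_step _ a _ h2) ih
    calc r'.sh ≤ r.sh := hle
      _ < (r.star s).sh := by simp [StExp.sh]
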